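/- Let γ : [a,b] → ℝ^N be an injective continuous curve of finite total curvature. For ξ < η in [a,b], let T_{ξη} = (γ(η) - γ(ξ))/‖γ(η) - γ(ξ)‖ denote the unit chord direction. If a < x ≤ y < b, then the angle between T_{ax} and T_{yb} is at most the total curvature of γ restricted to the open interval (a,b). -/

import Mathlib

open Set Filter


/-- Sum of exterior angles of the inscribed polygon with vertices `γ (t 0), …, γ (t (n+1))`,
the angles being taken at the `n` interior vertices. -/
noncomputable def polySum {E : Type*} [NormedAddCommGroup E] [InnerProductSpace ℝ E]
    (γ : ℝ → E) {n : ℕ} (t : Fin (n + 2) → ℝ) : ℝ :=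
  ∑ i : Fin n, InnerProductGeometry.angle
    (γ (t i.castSucc.succ) - γ (t i.castSucc.castSucc))
    (γ (t i.succ.succ) - γ (t i.castSucc.succ))

/-- The set of angle–sums of polygons inscribed in `γ` with vertices in `s`. -/
def polySums {E : Type*} [NormedAddCommGroup E] [InnerProductSpace ℝ E]
    (γ : ℝ → E) (s : Set ℝ) : Set ℝ :=
  {A | ∃ (n : ℕ) (t : Fin (n + 2) → ℝ), StrictMono t ∧ (∀ i, t i ∈ s) ∧ A = polySum γ t}

/-- Total curvature of `γ` on the parameter set `s` : the supremum of the angle sums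
of inscribed polygons with vertices in `s`. -/
noncomputable def totalCurvatureOn {E : Type*} [NormedAddCommGroup E] [InnerProductSpace ℝ E]
    (γ : ℝ → E) (s : Set ℝ) : ℝ :=
  sSup (polySums γ s)

/-- Cyclic angle sum for a closed (period-one) curve: vertices `γ (t 0), …, γ (t n)` within one
period, the chords taken cyclically (`Fin (n+1)` addition wraps around). -/
noncomputable def closedPolySum {E : Type*} [NormedAddCommGroup E] [InnerProductSpace ℝ E]
    (γ : ℝ → E) {n : ℕ} (t : Fin (n + 1) → ℝ) : ℝ :=
  ∑ i : Fin (n + 1), InnerProductGeometry.angle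
    (γ (t (i + 1)) - γ (t i)) (γ (t (i + 1 + 1)) - γ (t (i + 1)))

/-- Angle sums of closed polygons inscribed in a period-one closed curve `γ`. -/
def closedPolySums {E : Type*} [NormedAddCommGroup E] [InnerProductSpace ℝ E]
    (γ : ℝ → E) : Set ℝ :=
  {A | ∃ (n : ℕ) (t : Fin (n + 1) → ℝ), StrictMono t ∧ t (Fin.last n) < t 0 + 1 ∧
    A = closedPolySum γ t}

/-- Total curvature of a closed (period-one) curve. -/
noncomputable def closedTotalCurvature {E : Type*} [NormedAddCommGroup E]
    [InnerProductSpace ℝ E] (γ : ℝ → E) : ℝ :=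
  sSup (closedPolySums γ)


section AngleTriangle
open InnerProductGeometry Real
open scoped RealInnerProductSpace InnerProductSpace
variable {E : Type*} [NormedAddCommGroup E] [InnerProductSpace ℝ E]


lemma angle_triangle_unit {x y z : E} (hx : ‖x‖ = 1) (hy : ‖y‖ = 1) (hz : ‖z‖ = 1) :
    angle x z ≤ angle x y + angle y z := by
  set s : ℝ := ⟪x, y⟫ with hs
  set t : ℝ := ⟪y, z⟫ with ht
  set r : ℝ := ⟪x, z⟫ with hr
  have hs1 : |s| ≤ 1 := by simpa [hx, hy] using abs_real_inner_le_norm x y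
  have ht1 : |t| ≤ 1 := by simpa [hy, hz] using abs_real_inner_le_norm y z
  have hr1 : |r| ≤ 1 := by simpa [hx, hz] using abs_real_inner_le_norm x z
  have hxy : angle x y = arccos s := by simp [angle, hx, hy, ← hs]
  have hyz : angle y z = arccos t := by simp [angle, hy, hz, ← ht]
  have hxz : angle x z = arccos r := by simp [angle, hx, hz, ← hr]
  -- key inequality
  have key : s * t - Real.sqrt (1 - s ^ 2) * Real.sqrt (1 - t ^ 2) ≤ r := by
    have hu : ‖x - s • y‖ = Real.sqrt (1 - s ^ 2) := by
      rw [← Real.sqrt_sq (norm_nonneg _)]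
      congr 1
      rw [norm_sub_sq_real, real_inner_smul_right, norm_smul]
      simp [hx, hy, ← hs, sq_abs]
      ring
    have hv : ‖z - t • y‖ = Real.sqrt (1 - t ^ 2) := by
      rw [← Real.sqrt_sq (norm_nonneg _)]
      congr 1
      rw [norm_sub_sq_real, real_inner_smul_right, norm_smul]
      have hzy : t = ⟪z, y⟫ := ht.trans (real_inner_comm z y)
      simp [hy, hz, ← hzy, sq_abs]
      ring
    have hiv : ⟪x - s • y, z - t • y⟫ = r - s * t := by
      simp [inner_sub_sub_self, inner_sub_left, inner_sub_right, real_inner_smul_left,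
        real_inner_smul_right, real_inner_self_eq_norm_sq, hy, ← hs, ← ht, ← hr,
        real_inner_comm y z]
    have := abs_real_inner_le_norm (x - s • y) (z - t • y)
    rw [hiv, hu, hv] at this
    have := (abs_le.mp this).1
    linarith
  by_cases hp : π ≤ arccos s + arccos t
  · calc angle x z ≤ π := angle_le_pi x z
      _ ≤ _ := by rw [hxy, hyz]; exact hp
  · push_neg at hp
    rw [hxy, hyz, hxz]
    by_contra hlt
    push_neg at hlt
    have h1 : Real.cos (arccos r) < Real.cos (arccos s + arccos t) :=
      Real.strictAntiOn_cos
        ⟨by linarith [arccos_nonneg s, arccos_nonneg t], hp.le⟩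
        ⟨arccos_nonneg r, arccos_le_pi r⟩ hlt
    rw [Real.cos_arccos (abs_le.mp hr1).1 (abs_le.mp hr1).2, Real.cos_add,
      Real.cos_arccos (abs_le.mp hs1).1 (abs_le.mp hs1).2,
      Real.cos_arccos (abs_le.mp ht1).1 (abs_le.mp ht1).2,
      Real.sin_arccos, Real.sin_arccos] at h1
    linarith

lemma angle_triangle' (x y z : E) : angle x z ≤ angle x y + angle y z := by
  by_cases hx : x = 0
  · simp [hx, angle_zero_left, angle_nonneg]
  by_cases hz : z = 0
  · simp [hz, angle_zero_right]
    linarith [angle_nonneg x y]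
  by_cases hy : y = 0
  · rw [hy, angle_zero_left, angle_zero_right]
    linarith [angle_le_pi x z]
  have hx' : (0:ℝ) < ‖x‖⁻¹ := by simp [norm_pos_iff, hx, hy, hz]
  have hy' : (0:ℝ) < ‖y‖⁻¹ := by simp [norm_pos_iff, hx, hy, hz]
  have hz' : (0:ℝ) < ‖z‖⁻¹ := by simp [norm_pos_iff, hx, hy, hz]
  have e1 : angle x z = angle (‖x‖⁻¹ • x) (‖z‖⁻¹ • z) := by
    rw [angle_smul_left_of_pos _ _ hx', angle_smul_right_of_pos _ _ hz']
  have e2 : angle x y = angle (‖x‖⁻¹ • x) (‖y‖⁻¹ • y) := by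
    rw [angle_smul_left_of_pos _ _ hx', angle_smul_right_of_pos _ _ hy']
  have e3 : angle y z = angle (‖y‖⁻¹ • y) (‖z‖⁻¹ • z) := by
    rw [angle_smul_left_of_pos _ _ hy', angle_smul_right_of_pos _ _ hz']
  rw [e1, e2, e3]
  exact angle_triangle_unit (norm_smul_inv_norm hx) (norm_smul_inv_norm hy) (norm_smul_inv_norm hz)

end AngleTriangle

set_option maxHeartbeats 1000000 in
/-- Chord-angle lemma: if `γ : [a,b] → ℝ^N` is an injective continuous curve of finite total
curvature and `a < x ≤ y < b`, then the angle between the chord directions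
`T_{ax} = (γ x - γ a)/‖γ x - γ a‖` and `T_{yb} = (γ b - γ y)/‖γ b - γ y‖` is at most the
total curvature of `γ` restricted to the open interval `(a, b)`.
(The angle between two nonzero vectors is unchanged by normalization.) -/
theorem angle_chords_le_totalCurvature {N : ℕ} (a b : ℝ) (hab : a < b)
    (γ : ℝ → EuclideanSpace ℝ (Fin N))
    (hcont : ContinuousOn γ (Set.Icc a b))
    (hinj : Set.InjOn γ (Set.Icc a b))
    (hfin : BddAbove (polySums γ (Set.Ioo a b)))
    (x y : ℝ) (hax : a < x) (hxy : x ≤ y) (hyb : y < b) :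
    InnerProductGeometry.angle (γ x - γ a) (γ b - γ y) ≤
      totalCurvatureOn γ (Set.Ioo a b) := by
  have haI : a ∈ Set.Icc a b := ⟨le_refl a, hab.le⟩
  have hbI : b ∈ Set.Icc a b := ⟨hab.le, le_refl b⟩
  have hxI : x ∈ Set.Icc a b := ⟨hax.le, hxy.trans hyb.le⟩
  have hyI : y ∈ Set.Icc a b := ⟨hax.le.trans hxy, hyb.le⟩
  have hxa : γ x - γ a ≠ 0 := sub_ne_zero.mpr fun h => hax.ne' (hinj hxI haI h)
  have hby : γ b - γ y ≠ 0 := sub_ne_zero.mpr fun h => hyb.ne (hinj hyI hbI h.symm)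
  have key : ∀ a' ∈ Set.Ioo a x, ∀ b' ∈ Set.Ioo y b,
      InnerProductGeometry.angle (γ x - γ a') (γ b' - γ y) ≤
        totalCurvatureOn γ (Set.Ioo a b) := by
    intro a' ha' b' hb'
    rcases eq_or_lt_of_le hxy with h | h
    · subst h
      have hmem : polySum γ ![a', x, b'] ∈ polySums γ (Set.Ioo a b) := by
        refine ⟨1, ![a', x, b'], ?_, ?_, rfl⟩
        · rw [Fin.strictMono_iff_lt_succ]
          intro i
          fin_cases i <;> simp [ha'.2, hb'.1]
        · intro i
          fin_cases i <;> simp only [Set.mem_Ioo] <;> constructor <;> simp <;>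
            linarith [ha'.1, ha'.2, hb'.1, hb'.2]
      have heq : polySum γ ![a', x, b'] =
          InnerProductGeometry.angle (γ x - γ a') (γ b' - γ x) := by
        simp [polySum, Fin.sum_univ_one]
      calc InnerProductGeometry.angle (γ x - γ a') (γ b' - γ x)
          = polySum γ ![a', x, b'] := heq.symm
        _ ≤ _ := le_csSup hfin hmem
    · have hmem : polySum γ ![a', x, y, b'] ∈ polySums γ (Set.Ioo a b) := by
        refine ⟨2, ![a', x, y, b'], ?_, ?_, rfl⟩
        · rw [Fin.strictMono_iff_lt_succ]
          intro i
          fin_cases i <;> simp [ha'.2, h, hb'.1, Fin.castSucc, Fin.castAdd, Fin.castLE, Matrix.cons_val_succ]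
        · intro i
          fin_cases i <;> simp only [Set.mem_Ioo] <;> constructor <;> simp <;>
            linarith [ha'.1, ha'.2, hb'.1, hb'.2]
      have heq : polySum γ ![a', x, y, b'] =
          InnerProductGeometry.angle (γ x - γ a') (γ y - γ x) +
            InnerProductGeometry.angle (γ y - γ x) (γ b' - γ y) := by
        simp [polySum, Fin.sum_univ_two]
      calc InnerProductGeometry.angle (γ x - γ a') (γ b' - γ y)
          ≤ InnerProductGeometry.angle (γ x - γ a') (γ y - γ x) +
            InnerProductGeometry.angle (γ y - γ x) (γ b' - γ y) := angle_triangle' _ _ _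
        _ = polySum γ ![a', x, y, b'] := heq.symm
        _ ≤ _ := le_csSup hfin hmem
  have ta : Filter.Tendsto γ (nhdsWithin a (Set.Ioo a x)) (nhds (γ a)) :=
    (hcont a haI).mono fun z hz => ⟨hz.1.le, hz.2.le.trans hxI.2⟩
  have tb : Filter.Tendsto γ (nhdsWithin b (Set.Ioo y b)) (nhds (γ b)) :=
    (hcont b hbI).mono fun z hz => ⟨hyI.1.trans hz.1.le, hz.2.le⟩
  haveI n1 : (nhdsWithin a (Set.Ioo a x)).NeBot := left_nhdsWithin_Ioo_neBot hax
  haveI n2 : (nhdsWithin b (Set.Ioo y b)).NeBot := right_nhdsWithin_Ioo_neBot hyb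
  have h1 : Filter.Tendsto (fun p : ℝ × ℝ => (γ x - γ p.1, γ p.2 - γ y))
      ((nhdsWithin a (Set.Ioo a x)) ×ˢ (nhdsWithin b (Set.Ioo y b)))
      (nhds (γ x - γ a, γ b - γ y)) :=
    (tendsto_const_nhds.sub (ta.comp tendsto_fst)).prodMk_nhds
      ((tb.comp tendsto_snd).sub tendsto_const_nhds)
  have hA := Filter.Tendsto.comp
    (InnerProductGeometry.continuousAt_angle (x := (γ x - γ a, γ b - γ y)) hxa hby) h1
  refine le_of_tendsto hA ?_
  filter_upwards [Filter.prod_mem_prod self_mem_nhdsWithin self_mem_nhdsWithin] with p hp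
  exact key p.1 hp.1 p.2 hp.2
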